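/- arXiv:1301.0810 — 2 statements merged into one kernel-verified Lean document; each statement's English description precedes it below -/
import Mathlib

section
/- Let X be a finite-dimensional real normed space and let f : X → ℝ ∪ {±∞} be a proper lower semicontinuous function. Then f is 1-coercive, i.e. lim_{‖x‖→∞} f(x)/‖x‖ = +∞, if and only if the recession function f_∞ equals the indicator function of {0}, equivalently the recession cone of the epigraph of f equals {0} × ℝ₊. -/
open Set Filter Topology Pointwise

variable {X : Type*} [NormedAddCommGroup X] [NormedSpace ℝ X]

/-- The recession cone `S_∞` of a set `S` in a normed space. -/
def recessionCone {Y : Type*} [NormedAddCommGroup Y] [NormedSpace ℝ Y] (S : Set Y) : Set Y :=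
  {u | ∃ t : ℕ → ℝ, (∀ n, 0 < t n) ∧ Tendsto t atTop (𝓝 0) ∧
       ∃ a : ℕ → Y, (∀ n, a n ∈ S) ∧ Tendsto (fun n => t n • a n) atTop (𝓝 u)}

/-- The epigraph `{(x, λ) : f x ≤ λ}` of an `EReal`-valued function. -/
def epiSet (f : X → EReal) : Set (X × ℝ) := {p | f p.1 ≤ (p.2 : EReal)}

/-- The recession function `f_∞`, whose value at `u` is
`inf {α ∈ ℝ : (u, α) ∈ (epi f)_∞}` (computed in `EReal`). -/
noncomputable def recFn (f : X → EReal) (u : X) : EReal :=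
  sInf ((fun α : ℝ => (α : EReal)) '' {α : ℝ | (u, α) ∈ recessionCone (epiSet f)})

/-- `f` is 1-coercive: `f x / ‖x‖ → +∞` as `‖x‖ → ∞`, i.e. for every `M` one has
`f x ≥ M * ‖x‖` for all `x` of sufficiently large norm. -/
def OneCoercive (f : X → EReal) : Prop :=
  ∀ M : ℝ, ∃ R : ℝ, ∀ x : X, R ≤ ‖x‖ → ((M * ‖x‖ : ℝ) : EReal) ≤ f x

/-- A lower semicontinuous `EReal`-valued function that never takes the value `⊥`
is bounded below (by a real constant) on every compact set. -/
lemma lsc_bddBelow_on_compact {f : X → EReal} (hlsc : LowerSemicontinuous f)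
    (hne : ∀ x, f x ≠ ⊥) {K : Set X} (hK : IsCompact K) :
    ∃ m : ℝ, ∀ x ∈ K, (m : EReal) ≤ f x := by
  by_contra h
  push_neg at h
  choose x hxK hx using fun n : ℕ => h (-(n : ℝ))
  obtain ⟨a, haK, φ, hφ, hconv⟩ := hK.tendsto_subseq hxK
  obtain ⟨r, hr1, hr2⟩ := EReal.exists_between_coe_real (bot_lt_iff_ne_bot.2 (hne a))
  have hev : ∀ᶠ n in atTop, (r : EReal) < f (x (φ n)) := hconv.eventually (hlsc a r hr2)
  obtain ⟨n, hn1, hn2⟩ := (hev.and (eventually_gt_atTop ⌈-r⌉₊)).exists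
  have hφn : (n : ℝ) ≤ (φ n : ℝ) := by exact_mod_cast hφ.le_apply
  have h1 : f (x (φ n)) < ((-(n : ℝ)) : EReal) := by
    refine lt_of_lt_of_le (hx (φ n)) ?_
    exact_mod_cast neg_le_neg hφn
  have h2 : (-(n : ℝ)) < r := by
    have : -r < (n : ℝ) := lt_of_le_of_lt (Nat.le_ceil _) (by exact_mod_cast hn2)
    linarith
  have : (r : EReal) < (r : EReal) :=
    lt_trans (lt_trans hn1 h1) (by exact_mod_cast h2)
  exact lt_irrefl _ this

/-- A proper lsc function `f` on a nontrivial finite-dimensional real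
normed space is 1-coercive iff its recession function is the indicator function of `{0}`,
equivalently the recession cone of its epigraph equals `{0} × ℝ₊`. -/
theorem stmt7 [FiniteDimensional ℝ X] [Nontrivial X]
    (f : X → EReal) (hproper : (∃ x, f x ≠ ⊤) ∧ ∀ x, f x ≠ ⊥)
    (hlsc : LowerSemicontinuous f) :
    OneCoercive f ↔
      ((recFn f 0 = 0 ∧ ∀ u : X, u ≠ 0 → recFn f u = ⊤) ∧
        recessionCone (epiSet f) = ({0} : Set X) ×ˢ Ici (0 : ℝ)) := by
  obtain ⟨⟨x₀, hx₀⟩, hbot⟩ := hproper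
  obtain ⟨r, hr⟩ : ∃ r : ℝ, f x₀ = (r : EReal) := by
    lift f x₀ to ℝ using ⟨hx₀, hbot x₀⟩ with r hr
    exact ⟨r, rfl⟩
  constructor
  · intro hc
    -- a global real lower bound for f
    obtain ⟨R₁, hR₁⟩ := hc 1
    obtain ⟨m₀, hm₀⟩ := lsc_bddBelow_on_compact hlsc hbot
      (isCompact_closedBall (0 : X) (max R₁ 0))
    set m : ℝ := min m₀ 0 with hm
    have hglobal : ∀ x : X, (m : EReal) ≤ f x := by
      intro x
      rcases le_or_gt ‖x‖ (max R₁ 0) with hx | hx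
      · refine le_trans ?_ (hm₀ x (by simpa [Metric.mem_closedBall, dist_zero_right] using hx))
        exact_mod_cast min_le_left _ _
      · have h1 : ((1 * ‖x‖ : ℝ) : EReal) ≤ f x :=
          hR₁ x (le_of_lt (lt_of_le_of_lt (le_max_left _ _) hx))
        refine le_trans ?_ h1
        have : m ≤ 1 * ‖x‖ := le_trans (min_le_right _ _) (by positivity)
        exact_mod_cast this
    -- the recession cone equality
    have hcone : recessionCone (epiSet f) = ({0} : Set X) ×ˢ Ici (0 : ℝ) := by
      ext ⟨u, α⟩
      constructor
      · rintro ⟨t, ht, ht0, a, ha, hconv⟩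
        have hu : Tendsto (fun n => t n • (a n).1) atTop (𝓝 u) := by
          have := (continuous_fst.tendsto ((u, α) : X × ℝ)).comp hconv
          simpa [Function.comp_def] using this
        have hα : Tendsto (fun n => t n * (a n).2) atTop (𝓝 α) := by
          have := (continuous_snd.tendsto ((u, α) : X × ℝ)).comp hconv
          simpa [Prod.smul_def, smul_eq_mul, Function.comp_def] using this
        have hu0 : u = 0 := by
          by_contra hu0
          have hunorm : (0 : ℝ) < ‖u‖ := norm_pos_iff.2 hu0
          have h1 : Tendsto (fun n => t n * ‖(a n).1‖) atTop (𝓝 ‖u‖) := by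
            have := hu.norm
            simpa [norm_smul, Real.norm_of_nonneg (le_of_lt (ht _))] using this
          have hinv : Tendsto (fun n => (t n)⁻¹) atTop atTop := by
            refine tendsto_inv_nhdsGT_zero.comp ?_
            rw [tendsto_nhdsWithin_iff]
            exact ⟨ht0, Eventually.of_forall fun n => ht n⟩
          have hnorm_inf : Tendsto (fun n => ‖(a n).1‖) atTop atTop := by
            have := h1.pos_mul_atTop hunorm hinv
            refine this.congr fun n => ?_
            rw [mul_comm, ← mul_assoc, inv_mul_cancel₀ (ht n).ne', one_mul]
          have key : ∀ M : ℝ, M * ‖u‖ ≤ α := by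
            intro M
            obtain ⟨R, hR⟩ := hc M
            have hev : ∀ᶠ n in atTop, t n * (M * ‖(a n).1‖) ≤ t n * (a n).2 := by
              filter_upwards [hnorm_inf.eventually_ge_atTop R] with n hn
              have h2 : ((M * ‖(a n).1‖ : ℝ) : EReal) ≤ ((a n).2 : EReal) :=
                le_trans (hR _ hn) (ha n)
              have h3 : M * ‖(a n).1‖ ≤ (a n).2 := by exact_mod_cast h2
              exact mul_le_mul_of_nonneg_left h3 (le_of_lt (ht n))
            have hL : Tendsto (fun n => t n * (M * ‖(a n).1‖)) atTop (𝓝 (M * ‖u‖)) := by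
              have := h1.const_mul M
              refine this.congr fun n => by ring
            exact le_of_tendsto_of_tendsto hL hα hev
          have := key ((α + 1) / ‖u‖)
          rw [div_mul_cancel₀ _ (ne_of_gt hunorm)] at this
          linarith
        have hα0 : 0 ≤ α := by
          have hev : ∀ᶠ n in atTop, t n * m ≤ t n * (a n).2 := by
            refine Eventually.of_forall fun n => ?_
            have h2 : (m : EReal) ≤ ((a n).2 : EReal) := le_trans (hglobal _) (ha n)
            have h3 : m ≤ (a n).2 := by exact_mod_cast h2
            exact mul_le_mul_of_nonneg_left h3 (le_of_lt (ht n))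
          have hL : Tendsto (fun n => t n * m) atTop (𝓝 0) := by
            have := ht0.mul_const m
            simpa using this
          exact le_of_tendsto_of_tendsto hL hα hev
        exact ⟨by simpa using hu0, hα0⟩
      · rintro ⟨hu, hα⟩
        have hu0 : u = 0 := by simpa using hu
        have hα0 : (0 : ℝ) ≤ α := hα
        refine ⟨fun n => 1 / ((n : ℝ) + 1), fun n => by positivity,
          tendsto_one_div_add_atTop_nhds_zero_nat, fun n => (x₀, ((n : ℝ) + 1) * α + r),
          fun n => ?_, ?_⟩
        · show f x₀ ≤ ((((n : ℝ) + 1) * α + r : ℝ) : EReal)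
          rw [hr]
          have : r ≤ ((n : ℝ) + 1) * α + r := by nlinarith
          exact_mod_cast this
        · have h1 : Tendsto (fun n : ℕ => (1 / ((n : ℝ) + 1)) • x₀) atTop (𝓝 u) := by
            rw [hu0]
            have := (tendsto_one_div_add_atTop_nhds_zero_nat :
              Tendsto (fun n : ℕ => 1 / ((n : ℝ) + 1)) atTop (𝓝 0)).smul_const x₀
            simpa using this
          have h2 : Tendsto (fun n : ℕ => (1 / ((n : ℝ) + 1)) * (((n : ℝ) + 1) * α + r))
              atTop (𝓝 α) := by
            have h3 : Tendsto (fun n : ℕ => α + r * (1 / ((n : ℝ) + 1))) atTop (𝓝 α) := by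
              have := (tendsto_one_div_add_atTop_nhds_zero_nat.const_mul r).const_add α
              simpa using this
            refine h3.congr fun n => ?_
            have hn : ((n : ℝ) + 1) ≠ 0 := by positivity
            field_simp
          have := h1.prodMk_nhds h2
          refine this.congr fun n => ?_
          simp [Prod.smul_def, smul_eq_mul]
      -- end ext
    refine ⟨⟨?_, ?_⟩, hcone⟩
    · -- recFn f 0 = 0
      have hset : {α : ℝ | ((0 : X), α) ∈ recessionCone (epiSet f)} = Ici (0 : ℝ) := by
        rw [hcone]; ext α; simp
      rw [recFn, hset]
      apply le_antisymm
      · exact sInf_le ⟨0, self_mem_Ici, rfl⟩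
      · refine le_sInf ?_
        rintro b ⟨β, hβ, rfl⟩
        exact EReal.coe_nonneg.2 hβ
    · -- recFn f u = ⊤ for u ≠ 0
      intro u hu
      have hset : {α : ℝ | (u, α) ∈ recessionCone (epiSet f)} = ∅ := by
        rw [hcone]; ext α
        simp only [mem_setOf_eq, Set.mem_prod, mem_singleton_iff, mem_empty_iff_false, iff_false]
        rintro ⟨h1, -⟩; exact hu h1
      rw [recFn, hset, image_empty, sInf_empty]
  · rintro ⟨-, hcone⟩
    intro M
    by_contra h
    push_neg at h
    choose x hx1 hx2 using fun n : ℕ => h ((n : ℝ) + 1)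
    have hxpos : ∀ n, (0 : ℝ) < ‖x n‖ := fun n =>
      lt_of_lt_of_le (by positivity) (hx1 n)
    have hxmem : ∀ n, (x n, M * ‖x n‖) ∈ epiSet f := fun n => le_of_lt (hx2 n)
    set t : ℕ → ℝ := fun n => ‖x n‖⁻¹ with htdef
    have ht : ∀ n, 0 < t n := fun n => inv_pos.2 (hxpos n)
    have ht0 : Tendsto t atTop (𝓝 0) := by
      have hb : ∀ n, t n ≤ 1 / ((n : ℝ) + 1) := by
        intro n
        rw [htdef]
        simp only [one_div]
        exact inv_anti₀ (by positivity) (hx1 n)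
      exact squeeze_zero (fun n => le_of_lt (ht n)) hb
        tendsto_one_div_add_atTop_nhds_zero_nat
    have hsphere : ∀ n, t n • x n ∈ Metric.sphere (0 : X) 1 := by
      intro n
      simp only [Metric.mem_sphere, dist_zero_right, norm_smul, htdef,
        Real.norm_of_nonneg (le_of_lt (inv_pos.2 (hxpos n)))]
      field_simp
      exact div_self (hxpos n).ne'
    obtain ⟨u, huS, φ, hφ, hφconv⟩ := (isCompact_sphere (0 : X) 1).tendsto_subseq hsphere
    have hmem : (u, M) ∈ recessionCone (epiSet f) := by
      refine ⟨t ∘ φ, fun n => ht _, ht0.comp hφ.tendsto_atTop,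
        fun n => (x (φ n), M * ‖x (φ n)‖), fun n => hxmem _, ?_⟩
      have h2 : Tendsto (fun n : ℕ => t (φ n) * (M * ‖x (φ n)‖)) atTop (𝓝 M) := by
        have : ∀ n, t (φ n) * (M * ‖x (φ n)‖) = M := by
          intro n
          show ‖x (φ n)‖⁻¹ * (M * ‖x (φ n)‖) = M
          rw [mul_comm M, ← mul_assoc, inv_mul_cancel₀ (hxpos (φ n)).ne', one_mul]
        simpa [this] using (tendsto_const_nhds : Tendsto (fun _ : ℕ => M) atTop (𝓝 M))
      have := hφconv.prodMk_nhds h2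
      refine this.congr fun n => ?_
      simp [Prod.smul_def, smul_eq_mul, Function.comp]
    rw [hcone] at hmem
    have : u = 0 := by simpa using hmem.1
    rw [this] at huS
    simp at huS
end

section
/- Let X be a finite-dimensional real normed space and f : X → ℝ ∪ {±∞} a proper lower semicontinuous function. Assume the recession function f_∞ is a proper convex (hence sublinear) function satisfying f_∞(u) + f_∞(−u) > 0 for all u ∈ X \ {0}, and that f(x + u) ≤ f(x) + f_∞(u) for all x, u ∈ X. Then conv(epi f) is closed. In particular, if f is 1-coercive (lim_{‖x‖→∞} f(x)/‖x‖ = +∞) then conv(epi f) is closed. -/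
open Set Filter Topology Pointwise

variable {X : Type*} [NormedAddCommGroup X] [NormedSpace ℝ X]

section helpers

lemma zero_mem_recessionCone {Y : Type*} [NormedAddCommGroup Y] [NormedSpace ℝ Y]
    {S : Set Y} (hS : S.Nonempty) : (0 : Y) ∈ recessionCone S := by
  obtain ⟨s₀, hs₀⟩ := hS
  refine ⟨fun n => ((n : ℝ) + 1)⁻¹, fun n => by positivity, ?_, fun _ => s₀, fun _ => hs₀, ?_⟩
  · exact tendsto_one_div_add_atTop_nhds_zero_nat.congr (fun n => by rw [one_div])
  · have h : Tendsto (fun n : ℕ => 1 / ((n : ℝ) + 1)) atTop (𝓝 0) := tendsto_one_div_add_atTop_nhds_zero_nat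
    have : Tendsto (fun n : ℕ => (1 / ((n : ℝ) + 1)) • s₀) atTop (𝓝 ((0 : ℝ) • s₀)) :=
      h.smul_const s₀
    simpa [one_div] using this

lemma smul_mem_recessionCone {Y : Type*} [NormedAddCommGroup Y] [NormedSpace ℝ Y]
    {S : Set Y} {u : Y} (hu : u ∈ recessionCone S) {c : ℝ}
    (hc : 0 < c) : c • u ∈ recessionCone S := by
  obtain ⟨t, ht, ht0, a, ha, hta⟩ := hu
  refine ⟨fun n => c * t n, fun n => mul_pos hc (ht n), ?_, a, ha, ?_⟩
  · simpa using ht0.const_mul c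
  · have := hta.const_smul c
    simpa [smul_smul] using this


lemma recFn_le {f : X → EReal} {u : X} {α : ℝ} (h : (u, α) ∈ recessionCone (epiSet f)) :
    recFn f u ≤ (α : EReal) :=
  sInf_le ⟨α, h, rfl⟩


lemma recessionCone_epi_upward {f : X → EReal} {u : X} {α α' : ℝ}
    (h : (u, α) ∈ recessionCone (epiSet f)) (hle : α ≤ α') :
    (u, α') ∈ recessionCone (epiSet f) := by
  obtain ⟨t, ht, ht0, a, ha, hta⟩ := h
  refine ⟨t, ht, ht0, fun n => ((a n).1, (a n).2 + (α' - α) / t n), fun n => ?_, ?_⟩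
  · have h1 : f (a n).1 ≤ ((a n).2 : EReal) := ha n
    refine h1.trans ?_
    have : (a n).2 ≤ (a n).2 + (α' - α) / t n := by
      have : 0 ≤ (α' - α) / t n := div_nonneg (by linarith) (ht n).le
      linarith
    exact_mod_cast this
  · have heq : (fun n => t n • (((a n).1, (a n).2 + (α' - α) / t n) : X × ℝ))
        = fun n => (t n • a n) + ((0 : X), α' - α) := by
      funext n
      have htn : t n ≠ 0 := (ht n).ne'
      simp [Prod.ext_iff, Prod.smul_def, smul_eq_mul]
      field_simp
    rw [heq]
    have := hta.add (tendsto_const_nhds (x := ((0 : X), α' - α)))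
    simpa using this

lemma mem_cone_of_recFn_le {f : X → EReal} {u : X} {α : ℝ} (h : recFn f u ≤ (α : EReal))
    {ε : ℝ} (hε : 0 < ε) : (u, α + ε) ∈ recessionCone (epiSet f) := by
  have hlt : recFn f u < ((α + ε : ℝ) : EReal) :=
    lt_of_le_of_lt h (by exact_mod_cast (by linarith : α < α + ε))
  rw [recFn, sInf_lt_iff] at hlt
  obtain ⟨x, ⟨β, hβ, rfl⟩, hx⟩ := hlt
  have : (β : EReal) ≤ ((α + ε : ℝ) : EReal) := hx.le
  exact recessionCone_epi_upward hβ (by exact_mod_cast this)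

lemma ereal_le_of_forall_add {x : EReal} {a : ℝ}
    (h : ∀ ε : ℝ, 0 < ε → x ≤ ((a + ε : ℝ) : EReal)) : x ≤ (a : EReal) := by
  induction x using EReal.rec with
  | bot => exact bot_le
  | coe t =>
    have : ∀ ε : ℝ, 0 < ε → t ≤ a + ε := fun ε hε => by exact_mod_cast h ε hε
    exact_mod_cast le_of_forall_pos_le_add this
  | top =>
    exfalso
    have := h 1 one_pos
    exact (EReal.coe_ne_top (a+1)) (top_le_iff.mp this)

lemma recFn_smul_le {f : X → EReal} {u : X} {α : ℝ} (h : recFn f u ≤ (α : EReal)) {c : ℝ}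
    (hc : 0 < c) : recFn f (c • u) ≤ ((c * α : ℝ) : EReal) := by
  apply ereal_le_of_forall_add
  intro ε hε
  have h1 : (u, α + ε / c) ∈ recessionCone (epiSet f) := mem_cone_of_recFn_le h (by positivity)
  have h2 := smul_mem_recessionCone h1 hc
  have h3 : c • ((u, α + ε / c) : X × ℝ) = (c • u, c * α + ε) := by
    rw [Prod.smul_mk]
    congr 1
    simp [smul_eq_mul]
    field_simp
  rw [h3] at h2
  exact recFn_le h2

lemma recFn_add_le {f : X → EReal} (hconv : Convex ℝ (epiSet (recFn f))) {u v : X} {α β : ℝ}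
    (hu : recFn f u ≤ (α : EReal)) (hv : recFn f v ≤ (β : EReal)) :
    recFn f (u + v) ≤ ((α + β : ℝ) : EReal) := by
  have hu' : ((u, α) : X × ℝ) ∈ epiSet (recFn f) := hu
  have hv' : ((v, β) : X × ℝ) ∈ epiSet (recFn f) := hv
  have hmid := hconv hu' hv' (by norm_num : (0:ℝ) ≤ 1/2) (by norm_num : (0:ℝ) ≤ 1/2) (by norm_num)
  rw [Prod.smul_mk, Prod.smul_mk, Prod.mk_add_mk] at hmid
  have hmid' : recFn f ((1/2 : ℝ) • u + (1/2 : ℝ) • v) ≤ ((α/2 + β/2 : ℝ) : EReal) := by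
    have h2 : ((1:ℝ)/2) * α + ((1:ℝ)/2) * β = α/2 + β/2 := by ring
    have := hmid
    simp only [smul_eq_mul, epiSet, Set.mem_setOf_eq] at this
    rw [h2] at this
    simpa using this
  have := recFn_smul_le hmid' (by norm_num : (0:ℝ) < 2)
  have he : (2 : ℝ) • ((1/2 : ℝ) • u + (1/2 : ℝ) • v) = u + v := by
    rw [smul_add, smul_smul, smul_smul]; norm_num
  rw [he] at this
  convert this using 2
  ring

lemma recFn_zero_le {f : X → EReal} (hS : (epiSet f).Nonempty) : recFn f 0 ≤ (0 : EReal) := by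
  have h0 : ((0 : X), (0 : ℝ)) ∈ recessionCone (epiSet f) := by
    have := zero_mem_recessionCone hS
    simpa [Prod.mk_zero_zero] using this
  simpa using recFn_le h0

lemma epi_add_rec {f : X → EReal} (hsub : ∀ x u : X, f (x + u) ≤ f x + recFn f u)
    {p w : X × ℝ} (hp : p ∈ epiSet f) (hw : w ∈ recessionCone (epiSet f)) :
    p + w ∈ epiSet f := by
  have hw' : (w.1, w.2) ∈ recessionCone (epiSet f) := by simpa using hw
  have h1 : recFn f w.1 ≤ (w.2 : EReal) := recFn_le hw'
  have h2 : f (p.1 + w.1) ≤ f p.1 + recFn f w.1 := hsub p.1 w.1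
  have h3 : f p.1 + recFn f w.1 ≤ ((p.2 : EReal) + (w.2 : EReal)) := add_le_add hp h1
  show f (p + w).1 ≤ (((p + w).2 : ℝ) : EReal)
  rw [Prod.fst_add, Prod.snd_add]
  calc f (p.1 + w.1) ≤ _ := h2.trans h3
  _ = (((p.2 + w.2 : ℝ)) : EReal) := (EReal.coe_add _ _).symm

lemma epi_add_rec_sum {f : X → EReal} (hsub : ∀ x u : X, f (x + u) ≤ f x + recFn f u)
    {ι : Type*} {T : Finset ι} {v : ι → X × ℝ} {p : X × ℝ} (hp : p ∈ epiSet f)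
    (hv : ∀ j ∈ T, v j ∈ recessionCone (epiSet f)) :
    p + ∑ j ∈ T, v j ∈ epiSet f := by
  classical
  induction T using Finset.induction_on with
  | empty => simpa using hp
  | insert _ _ hnot ih =>
    rename_i j T
    rw [Finset.sum_insert hnot]
    have h1 := ih (fun i hi => hv i (Finset.mem_insert_of_mem hi))
    have h2 := epi_add_rec hsub h1 (hv j (Finset.mem_insert_self j T))
    have : p + ∑ i ∈ T, v i + v j = p + (v j + ∑ i ∈ T, v i) := by abel
    rwa [this] at h2

lemma pad_sum {M : Type*} [AddCommMonoid M] {m N : ℕ} (hm : m ≤ N) (F : Fin m → M) :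
    (∑ i : Fin N, (if h : (i : ℕ) < m then F ⟨i, h⟩ else 0)) = ∑ j : Fin m, F j := by
  rw [Fin.sum_univ_eq_sum_range (fun i => if h : i < m then F ⟨i, h⟩ else 0) N]
  rw [← Finset.sum_subset (Finset.range_subset_range.2 hm)
    (fun x _ hx => by rw [Finset.mem_range] at hx; simp [hx])]
  rw [← Fin.sum_univ_eq_sum_range (fun i => if h : i < m then F ⟨i, h⟩ else 0) m]
  apply Finset.sum_congr rfl
  intro i _
  simp [i.isLt]

lemma caratheodory_fin {E : Type*} [NormedAddCommGroup E] [NormedSpace ℝ E]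
    [FiniteDimensional ℝ E] {S : Set E} (s₀ : E) (hs₀ : s₀ ∈ S) {z : E}
    (hz : z ∈ convexHull ℝ S) :
    ∃ (w : Fin (Module.finrank ℝ E + 1) → ℝ) (p : Fin (Module.finrank ℝ E + 1) → E),
      (∀ i, 0 ≤ w i) ∧ ∑ i, w i = 1 ∧ (∀ i, p i ∈ S) ∧ ∑ i, w i • p i = z := by
  classical
  set N := Module.finrank ℝ E + 1 with hN
  rw [convexHull_eq_union] at hz
  simp only [Set.mem_iUnion] at hz
  obtain ⟨t, hts, hai, hzt⟩ := hz
  rw [Finset.convexHull_eq] at hzt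
  obtain ⟨w, hw0, hw1, hwz⟩ := hzt
  rw [Finset.centerMass_eq_of_sum_1 _ _ hw1] at hwz
  have hm : t.card ≤ N := by
    have h1 := hai.card_le_finrank_succ
    rw [Fintype.card_coe] at h1
    exact h1.trans (by
      have := Submodule.finrank_le (vectorSpan ℝ (Set.range ((↑) : t → E)))
      omega)
  let e := t.equivFin
  let W : Fin N → ℝ := fun i => if h : (i : ℕ) < t.card then w ((e.symm ⟨i, h⟩ : t) : E) else 0
  let P : Fin N → E := fun i => if h : (i : ℕ) < t.card then ((e.symm ⟨i, h⟩ : t) : E) else s₀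
  refine ⟨W, P, ?_, ?_, ?_, ?_⟩
  · intro i
    by_cases h : (i : ℕ) < t.card
    · simp only [W, dif_pos h]; exact hw0 _ (Finset.coe_mem _)
    · simp [W, h]
  · have : ∑ i : Fin N, W i = ∑ j : Fin t.card, w ((e.symm j : t) : E) := by
      rw [← pad_sum hm (fun j => w ((e.symm j : t) : E))]
    rw [this, Equiv.sum_comp e.symm (fun x : t => w (x : E)), Finset.sum_coe_sort t (fun y => w y)]
    exact hw1
  · intro i
    by_cases h : (i : ℕ) < t.card
    · simp only [P, dif_pos h]; exact hts (Finset.coe_mem _)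
    · simp [P, h, hs₀]
  · have heq : ∀ i : Fin N, W i • P i
        = (if h : (i : ℕ) < t.card then (fun j : Fin t.card => w ((e.symm j : t) : E) • ((e.symm j : t) : E)) ⟨i, h⟩ else 0) := by
      intro i
      by_cases h : (i : ℕ) < t.card
      · simp [W, P, dif_pos h]
      · simp [W, P, h]
    rw [Finset.sum_congr rfl (fun i _ => heq i)]
    refine (pad_sum hm (fun j : Fin t.card => w ((e.symm j : t) : E) • ((e.symm j : t) : E))).trans ?_
    rw [Equiv.sum_comp e.symm (fun x : t => w (x : E) • (x : E)),
      Finset.sum_coe_sort t (fun y => w y • y)]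
    simpa using hwz

lemma recFn_sum_le {f : X → EReal} (hconv : Convex ℝ (epiSet (recFn f)))
    (hne : (epiSet f).Nonempty) {ι : Type*} (T : Finset ι) (U : ι → X) (B : ι → ℝ)
    (h : ∀ j ∈ T, recFn f (U j) ≤ ((B j : ℝ) : EReal)) :
    recFn f (∑ j ∈ T, U j) ≤ ((∑ j ∈ T, B j : ℝ) : EReal) := by
  classical
  induction T using Finset.induction_on with
  | empty => simpa using recFn_zero_le hne
  | insert _ _ hnot ih =>
    rename_i j T
    rw [Finset.sum_insert hnot, Finset.sum_insert hnot]
    exact recFn_add_le hconv (h j (Finset.mem_insert_self j T))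
      (ih fun i hi => h i (Finset.mem_insert_of_mem hi))

lemma ereal_eq_bot_of_le_mul {x : EReal} {b : ℝ} (hb : b < 0)
    (h : ∀ c : ℝ, 0 < c → x ≤ ((c * b : ℝ) : EReal)) : x = ⊥ := by
  induction x using EReal.rec with
  | bot => rfl
  | coe t =>
    exfalso
    have ht : t ≤ 1 * b := by exact_mod_cast h 1 one_pos
    have hc : 0 < (t - 1) / b := by
      apply div_pos_of_neg_of_neg _ hb
      nlinarith
    have := h _ hc
    have h2 : t ≤ (t - 1) / b * b := by exact_mod_cast this
    rw [div_mul_cancel₀ _ hb.ne] at h2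
    linarith
  | top =>
    exfalso
    have := h 1 one_pos
    exact (EReal.coe_ne_top (1 * b)) (top_le_iff.mp this)

theorem main_closed [FiniteDimensional ℝ X] (f : X → EReal)
    (hne : (epiSet f).Nonempty)
    (hclosed : IsClosed (epiSet f))
    (hrecbot : ∀ u, recFn f u ≠ ⊥)
    (hrecConvex : Convex ℝ (epiSet (recFn f)))
    (hpos : ∀ u : X, u ≠ 0 → 0 < recFn f u + recFn f (-u))
    (hsub : ∀ x u : X, f (x + u) ≤ f x + recFn f u) :
    IsClosed (convexHull ℝ (epiSet f)) := by
  classical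
  apply isClosed_of_closure_subset
  intro z hz
  obtain ⟨s₀, hs₀⟩ := hne
  rw [mem_closure_iff_seq_limit] at hz
  obtain ⟨zs, hzs, hzlim⟩ := hz
  set N : ℕ := Module.finrank ℝ (X × ℝ) + 1 with hNdef
  have H : ∀ k : ℕ, ∃ (w : Fin N → ℝ) (p : Fin N → X × ℝ),
      (∀ i, 0 ≤ w i) ∧ ∑ i, w i = 1 ∧ (∀ i, p i ∈ epiSet f) ∧ ∑ i, w i • p i = zs k :=
    fun k => caratheodory_fin s₀ hs₀ (hzs k)
  choose w p hw0 hw1 hp hsum using H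
  set σ : ℕ → ℝ := fun k => 1 + ∑ i, ‖w k i • p k i‖ with hσdef
  have hσ1 : ∀ k, 1 ≤ σ k := fun k => le_add_of_nonneg_right
    (Finset.sum_nonneg fun i _ => norm_nonneg _)
  have hσpos : ∀ k, 0 < σ k := fun k => lt_of_lt_of_le one_pos (hσ1 k)
  have hterm : ∀ k i, ‖w k i • p k i‖ ≤ σ k := by
    intro k i
    have h1 : ‖w k i • p k i‖ ≤ ∑ j, ‖w k j • p k j‖ :=
      Finset.single_le_sum (f := fun j => ‖w k j • p k j‖)
        (fun j _ => norm_nonneg _) (Finset.mem_univ i)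
    have := hσ1 k
    simp only [hσdef]
    linarith
  set y : ℕ → (Fin N → ℝ) × (Fin N → X × ℝ) × ℝ :=
    fun k => (w k, fun i => (σ k)⁻¹ • (w k i • p k i), (σ k)⁻¹) with hydef
  have hybdd : ∀ k, y k ∈ Metric.closedBall (0 : (Fin N → ℝ) × (Fin N → X × ℝ) × ℝ) 1 := by
    intro k
    rw [Metric.mem_closedBall, dist_zero_right, Prod.norm_def]
    have hw_le : ∀ i, w k i ≤ 1 := by
      intro i
      rw [← hw1 k]
      exact Finset.single_le_sum (fun j _ => hw0 k j) (Finset.mem_univ i)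
    refine max_le ?_ ?_
    · rw [pi_norm_le_iff_of_nonneg zero_le_one]
      intro i
      rw [Real.norm_eq_abs, abs_le]
      exact ⟨by linarith [hw0 k i], hw_le i⟩
    · rw [Prod.norm_def]
      refine max_le ?_ ?_
      · rw [pi_norm_le_iff_of_nonneg zero_le_one]
        intro i
        rw [norm_smul, norm_inv, Real.norm_eq_abs, abs_of_pos (hσpos k)]
        rw [inv_mul_le_iff₀ (hσpos k), mul_one]
        exact hterm k i
      · rw [Real.norm_eq_abs, abs_of_pos (inv_pos.mpr (hσpos k))]
        rw [inv_le_one_iff₀]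
        right; exact hσ1 k
  obtain ⟨a, -, φ, hφ, hconv⟩ :=
    tendsto_subseq_of_bounded Metric.isBounded_closedBall hybdd
  set lam : Fin N → ℝ := a.1 with hlamdef
  set vt : Fin N → X × ℝ := a.2.1 with hvtdef
  set τ : ℝ := a.2.2 with hτdef
  have hlam : ∀ i, Tendsto (fun k => w (φ k) i) atTop (𝓝 (lam i)) := by
    intro i
    have h1 : Tendsto (fun k => (y (φ k)).1) atTop (𝓝 a.1) :=
      (continuous_fst.tendsto a).comp hconv
    exact ((continuous_apply i).tendsto a.1).comp h1
  have hvt : ∀ i, Tendsto (fun k => (σ (φ k))⁻¹ • (w (φ k) i • p (φ k) i)) atTop (𝓝 (vt i)) := by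
    intro i
    have h1 : Tendsto (fun k => (y (φ k)).2.1) atTop (𝓝 a.2.1) :=
      (continuous_fst.tendsto a.2).comp ((continuous_snd.tendsto a).comp hconv)
    exact ((continuous_apply i).tendsto a.2.1).comp h1
  have hτ : Tendsto (fun k => (σ (φ k))⁻¹) atTop (𝓝 τ) :=
    (continuous_snd.tendsto a.2).comp ((continuous_snd.tendsto a).comp hconv)
  have hτ0 : 0 ≤ τ := ge_of_tendsto hτ (Eventually.of_forall fun k => (inv_pos.mpr (hσpos _)).le)
  have hlam0 : ∀ i, 0 ≤ lam i := fun i =>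
    ge_of_tendsto (hlam i) (Eventually.of_forall fun k => hw0 _ i)
  have hlamsum : ∑ i, lam i = 1 := by
    have h1 : Tendsto (fun k => ∑ i, w (φ k) i) atTop (𝓝 (∑ i, lam i)) :=
      tendsto_finset_sum _ fun i _ => hlam i
    have h2 : Tendsto (fun k => ∑ i, w (φ k) i) atTop (𝓝 1) := by
      simpa [hw1] using (tendsto_const_nhds : Tendsto (fun _ : ℕ => (1:ℝ)) atTop (𝓝 1))
    exact tendsto_nhds_unique h1 h2
  rcases eq_or_lt_of_le hτ0 with hτz | hτpos
  · -- Case B : contradiction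
    exfalso
    have hτz' : τ = 0 := hτz.symm
    have hzφ : Tendsto (fun k => zs (φ k)) atTop (𝓝 z) := hzlim.comp hφ.tendsto_atTop
    have hwle : ∀ k i, w k i ≤ 1 := by
      intro k i
      rw [← hw1 k]
      exact Finset.single_le_sum (fun j _ => hw0 k j) (Finset.mem_univ i)
    have hW : ∀ i, vt i ∈ recessionCone (epiSet f) := by
      intro i
      by_cases hfz : ∃ᶠ k in atTop, w (φ k) i = 0
      · obtain ⟨ψ, hψ, hψ0⟩ := Filter.extraction_of_frequently_atTop hfz
        have h1 : Tendsto (fun n => (σ (φ (ψ n)))⁻¹ • (w (φ (ψ n)) i • p (φ (ψ n)) i)) atTop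
            (𝓝 (vt i)) := (hvt i).comp hψ.tendsto_atTop
        have h2 : vt i = 0 := by
          refine tendsto_nhds_unique h1 ?_
          have : (fun n => (σ (φ (ψ n)))⁻¹ • (w (φ (ψ n)) i • p (φ (ψ n)) i))
              = fun _ => (0 : X × ℝ) := funext fun n => by rw [hψ0 n, zero_smul, smul_zero]
          rw [this]; exact tendsto_const_nhds
        rw [h2]; exact zero_mem_recessionCone ⟨s₀, hs₀⟩
      · rw [Filter.not_frequently] at hfz
        have hev : ∀ᶠ k in atTop, 0 < w (φ k) i :=
          hfz.mono fun k hk => lt_of_le_of_ne (hw0 _ i) (Ne.symm hk)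
        rw [eventually_atTop] at hev
        obtain ⟨K, hK⟩ := hev
        refine ⟨fun n => (σ (φ (n + K)))⁻¹ * w (φ (n + K)) i,
          fun n => mul_pos (inv_pos.mpr (hσpos _)) (hK _ (Nat.le_add_left K n)), ?_,
          fun n => p (φ (n + K)) i, fun n => hp _ i, ?_⟩
        · have hub : Tendsto (fun n => (σ (φ (n + K)))⁻¹) atTop (𝓝 0) := by
            have := hτ.comp (tendsto_add_atTop_nat K)
            rwa [hτz'] at this
          refine squeeze_zero (fun n => le_of_lt (mul_pos (inv_pos.mpr (hσpos _))
            (hK _ (Nat.le_add_left K n)))) (fun n => ?_) hub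
          calc (σ (φ (n + K)))⁻¹ * w (φ (n + K)) i
              ≤ (σ (φ (n + K)))⁻¹ * 1 :=
                mul_le_mul_of_nonneg_left (hwle _ i) (inv_pos.mpr (hσpos _)).le
          _ = (σ (φ (n + K)))⁻¹ := mul_one _
        · have h1 := (hvt i).comp (tendsto_add_atTop_nat K)
          refine h1.congr fun n => ?_
          show (σ (φ (n + K)))⁻¹ • (w (φ (n + K)) i • p (φ (n + K)) i) = _
          rw [mul_smul]
    have hsum0 : ∑ i, vt i = 0 := by
      have h1 : Tendsto (fun k => ∑ i, (σ (φ k))⁻¹ • (w (φ k) i • p (φ k) i)) atTop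
          (𝓝 (∑ i, vt i)) := tendsto_finset_sum _ fun i _ => hvt i
      have h2 : Tendsto (fun k => ∑ i, (σ (φ k))⁻¹ • (w (φ k) i • p (φ k) i)) atTop
          (𝓝 (0 : X × ℝ)) := by
        have h3 : Tendsto (fun k => (σ (φ k))⁻¹ • zs (φ k)) atTop (𝓝 (τ • z)) := hτ.smul hzφ
        rw [hτz', zero_smul] at h3
        refine h3.congr fun k => ?_
        rw [← hsum (φ k), Finset.smul_sum]
      exact tendsto_nhds_unique h1 h2
    have hnorm1 : ∑ i, ‖vt i‖ = 1 := by
      have h1 : Tendsto (fun k => ∑ i, ‖(σ (φ k))⁻¹ • (w (φ k) i • p (φ k) i)‖) atTop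
          (𝓝 (∑ i, ‖vt i‖)) := tendsto_finset_sum _ fun i _ => (hvt i).norm
      have h2 : Tendsto (fun k => ∑ i, ‖(σ (φ k))⁻¹ • (w (φ k) i • p (φ k) i)‖) atTop
          (𝓝 (1 : ℝ)) := by
        have heq : ∀ k, ∑ i, ‖(σ (φ k))⁻¹ • (w (φ k) i • p (φ k) i)‖ = 1 - (σ (φ k))⁻¹ := by
          intro k
          have : ∀ i : Fin N, ‖(σ (φ k))⁻¹ • (w (φ k) i • p (φ k) i)‖
              = (σ (φ k))⁻¹ * ‖w (φ k) i • p (φ k) i‖ := by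
            intro i
            rw [norm_smul, Real.norm_eq_abs, abs_of_pos (inv_pos.mpr (hσpos _))]
          rw [Finset.sum_congr rfl fun i _ => this i, ← Finset.mul_sum]
          have hσk : ∑ i, ‖w (φ k) i • p (φ k) i‖ = σ (φ k) - 1 := by
            simp only [hσdef]; ring
          rw [hσk]
          field_simp
          rw [sub_div, div_self (hσpos _).ne']
        have h3 : Tendsto (fun k => 1 - (σ (φ k))⁻¹) atTop (𝓝 (1 - τ)) :=
          tendsto_const_nhds.sub hτ
        rw [hτz', sub_zero] at h3
        exact h3.congr fun k => (heq k).symm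
      exact tendsto_nhds_unique h1 h2
    have hrecle : ∀ i, recFn f (vt i).1 ≤ (((vt i).2 : ℝ) : EReal) := by
      intro i
      refine recFn_le ?_
      have := hW i
      simpa using this
    have hfst0 : ∑ i, (vt i).1 = 0 := by
      have := congrArg Prod.fst hsum0
      rwa [Prod.fst_sum] at this
    have hsnd0 : ∑ i, (vt i).2 = 0 := by
      have := congrArg Prod.snd hsum0
      rwa [Prod.snd_sum] at this
    by_cases hall : ∀ i, (vt i).1 = 0
    · have hnorm_eq : ∀ i, ‖vt i‖ = |(vt i).2| := by
        intro i
        rw [Prod.norm_def, hall i, norm_zero, Real.norm_eq_abs, max_eq_right (abs_nonneg _)]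
      have hexneg : ∃ i, (vt i).2 < 0 := by
        by_contra hno
        push_neg at hno
        have : ∑ i, ‖vt i‖ = ∑ i, (vt i).2 :=
          Finset.sum_congr rfl fun i _ => by rw [hnorm_eq i, abs_of_nonneg (hno i)]
        rw [hnorm1, hsnd0] at this
        norm_num at this
      obtain ⟨i, hi⟩ := hexneg
      have hb : recFn f 0 ≤ (((vt i).2 : ℝ) : EReal) := by
        have := hrecle i
        rwa [hall i] at this
      refine hrecbot 0 (ereal_eq_bot_of_le_mul hi fun c hc => ?_)
      have := recFn_smul_le hb hc
      rwa [smul_zero] at this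
    · push_neg at hall
      obtain ⟨i₁, hi₁⟩ := hall
      set u : X := (vt i₁).1 with hudef
      have h1 : recFn f u ≤ (((vt i₁).2 : ℝ) : EReal) := hrecle i₁
      have herase : ∑ j ∈ Finset.univ.erase i₁, (vt j).1 = -u := by
        have := Finset.sum_erase_add Finset.univ (fun j => (vt j).1) (Finset.mem_univ i₁)
        rw [hfst0] at this
        exact eq_neg_of_add_eq_zero_left this
      have h2 : recFn f (-u) ≤ ((∑ j ∈ Finset.univ.erase i₁, (vt j).2 : ℝ) : EReal) := by
        rw [← herase]
        exact recFn_sum_le hrecConvex ⟨s₀, hs₀⟩ _ _ _ fun j _ => hrecle j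
      have h3 : (vt i₁).2 + ∑ j ∈ Finset.univ.erase i₁, (vt j).2 = 0 := by
        have := Finset.sum_erase_add Finset.univ (fun j => (vt j).2) (Finset.mem_univ i₁)
        rw [hsnd0] at this
        linarith
      have h4 : recFn f u + recFn f (-u) ≤ (0 : EReal) := by
        have := add_le_add h1 h2
        rw [← EReal.coe_add, h3] at this
        simpa using this
      exact absurd (hpos u hi₁) (not_lt.mpr h4)
  · -- Case A
    have hσlim : Tendsto (fun k => σ (φ k)) atTop (𝓝 τ⁻¹) := by
      have := hτ.inv₀ hτpos.ne'
      simpa [inv_inv] using this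
    set v : Fin N → X × ℝ := fun i => τ⁻¹ • vt i with hvdef
    have hv : ∀ i, Tendsto (fun k => w (φ k) i • p (φ k) i) atTop (𝓝 (v i)) := by
      intro i
      have h1 := hσlim.smul (hvt i)
      refine h1.congr fun k => ?_
      rw [smul_inv_smul₀ (hσpos _).ne']
    have hzφ : Tendsto (fun k => zs (φ k)) atTop (𝓝 z) := hzlim.comp hφ.tendsto_atTop
    have hzv : ∑ i, v i = z := by
      have h1 : Tendsto (fun k => ∑ i, w (φ k) i • p (φ k) i) atTop (𝓝 (∑ i, v i)) :=
        tendsto_finset_sum _ fun i _ => hv i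
      have h2 : Tendsto (fun k => ∑ i, w (φ k) i • p (φ k) i) atTop (𝓝 z) := by
        refine hzφ.congr fun k => ?_
        rw [hsum]
      exact tendsto_nhds_unique h1 h2
    have hvrec : ∀ i, lam i = 0 → v i ∈ recessionCone (epiSet f) := by
      intro i hi
      by_cases hfz : ∃ᶠ k in atTop, w (φ k) i = 0
      · obtain ⟨ψ, hψ, hψ0⟩ := Filter.extraction_of_frequently_atTop hfz
        have h1 : Tendsto (fun n => w (φ (ψ n)) i • p (φ (ψ n)) i) atTop (𝓝 (v i)) :=
          (hv i).comp hψ.tendsto_atTop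
        have h2 : v i = 0 := by
          refine tendsto_nhds_unique h1 ?_
          have : (fun n => w (φ (ψ n)) i • p (φ (ψ n)) i) = fun _ => (0 : X × ℝ) :=
            funext fun n => by rw [hψ0 n, zero_smul]
          rw [this]; exact tendsto_const_nhds
        rw [h2]; exact zero_mem_recessionCone ⟨s₀, hs₀⟩
      · rw [Filter.not_frequently] at hfz
        have hev : ∀ᶠ k in atTop, 0 < w (φ k) i :=
          hfz.mono fun k hk => lt_of_le_of_ne (hw0 _ i) (Ne.symm hk)
        rw [eventually_atTop] at hev
        obtain ⟨K, hK⟩ := hev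
        refine ⟨fun n => w (φ (n + K)) i, fun n => hK _ (Nat.le_add_left K n), ?_,
          fun n => p (φ (n + K)) i, fun n => hp _ i, ?_⟩
        · have := (hlam i).comp (tendsto_add_atTop_nat K)
          rw [hi] at this; exact this
        · exact (hv i).comp (tendsto_add_atTop_nat K)
    have hsmem : ∀ i, ∃ qq, qq ∈ epiSet f ∧ (0 < lam i → lam i • qq = v i) := by
      intro i
      by_cases hi : 0 < lam i
      · have hwinv : Tendsto (fun k => (w (φ k) i)⁻¹ • (w (φ k) i • p (φ k) i)) atTop
            (𝓝 ((lam i)⁻¹ • v i)) := ((hlam i).inv₀ hi.ne').smul (hv i)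
        have hev : ∀ᶠ k in atTop, 0 < w (φ k) i := (hlam i).eventually (eventually_gt_nhds hi)
        have hq : Tendsto (fun k => p (φ k) i) atTop (𝓝 ((lam i)⁻¹ • v i)) := by
          refine hwinv.congr' (hev.mono fun k hk => ?_)
          rw [inv_smul_smul₀ hk.ne']
        refine ⟨(lam i)⁻¹ • v i, ?_, fun _ => smul_inv_smul₀ hi.ne' _⟩
        exact hclosed.mem_of_tendsto hq (Eventually.of_forall fun k => hp _ i)
      · exact ⟨s₀, hs₀, fun h => absurd h hi⟩
    choose q hqS hqv using hsmem
    have hex : ∃ i, 0 < lam i := by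
      by_contra hno
      push_neg at hno
      have : ∑ i, lam i = 0 :=
        Finset.sum_eq_zero fun i _ => le_antisymm (hno i) (hlam0 i)
      rw [hlamsum] at this; norm_num at this
    obtain ⟨i₀, hi₀⟩ := hex
    set T0 : Finset (Fin N) := Finset.univ.filter (fun j => lam j = 0) with hT0def
    set V : X × ℝ := ∑ j ∈ T0, v j with hVdef
    set Q : Fin N → X × ℝ := fun i => if i = i₀ then q i₀ + (lam i₀)⁻¹ • V else q i with hQdef
    have hQS : ∀ i, Q i ∈ epiSet f := by
      intro i
      simp only [hQdef]
      split_ifs with h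
      · rw [hVdef, Finset.smul_sum]
        refine epi_add_rec_sum hsub (hqS i₀) fun j hj => ?_
        have hj0 : lam j = 0 := (Finset.mem_filter.mp hj).2
        exact smul_mem_recessionCone (hvrec j hj0) (inv_pos.mpr hi₀)
      · exact hqS i
    have hzQ : ∑ i, lam i • Q i = z := by
      have step1 : ∑ i, lam i • Q i = (∑ i, lam i • q i) + V := by
        have : ∀ i, lam i • Q i = lam i • q i + (if i = i₀ then V else 0) := by
          intro i
          simp only [hQdef]
          split_ifs with h
          · subst h
            rw [smul_add, smul_inv_smul₀ hi₀.ne']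
          · rw [add_zero]
        rw [Finset.sum_congr rfl fun i _ => this i, Finset.sum_add_distrib]
        congr 1
        simp
      have step2 : (∑ i, lam i • q i) + V = ∑ i, v i := by
        have : ∀ i, v i = lam i • q i + (if lam i = 0 then v i else 0) := by
          intro i
          by_cases h : lam i = 0
          · rw [if_pos h, h, zero_smul, zero_add]
          · have hi : 0 < lam i := lt_of_le_of_ne (hlam0 i) (Ne.symm h)
            rw [if_neg h, add_zero, hqv i hi]
        rw [Finset.sum_congr rfl fun i _ => this i, Finset.sum_add_distrib]
        congr 1
        rw [hVdef, hT0def, Finset.sum_filter]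
      rw [step1, step2, hzv]
    rw [← hzQ]
    exact (convex_convexHull ℝ (epiSet f)).sum_mem (fun i _ => hlam0 i) hlamsum
      (fun i _ => subset_convexHull ℝ _ (hQS i))

lemma ereal_exists_real_lt (e : EReal) (h : e ≠ ⊥) : ∃ r : ℝ, (r : EReal) < e := by
  induction e using EReal.rec with
  | bot => exact absurd rfl h
  | coe t => exact ⟨t - 1, by exact_mod_cast sub_one_lt t⟩
  | top => exact ⟨0, EReal.coe_lt_top 0⟩

lemma lsc_bdd_on_compact {g : X → EReal} (hg : LowerSemicontinuous g)
    (hbot : ∀ x, g x ≠ ⊥) {K : Set X} (hK : IsCompact K) :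
    ∃ c : ℝ, ∀ x ∈ K, (c : EReal) ≤ g x := by
  have hr : ∀ x : X, ∃ r : ℝ, (r : EReal) < g x := fun x => ereal_exists_real_lt _ (hbot x)
  choose r hrlt using hr
  have hcover : K ⊆ ⋃ x : X, g ⁻¹' Ioi ((r x : EReal)) :=
    fun y _ => mem_iUnion.mpr ⟨y, hrlt y⟩
  obtain ⟨t, ht⟩ := hK.elim_finite_subcover _ (fun x => hg.isOpen_preimage (r x)) hcover
  obtain ⟨M, hM⟩ := Finset.exists_le (t.image fun x => -r x)
  refine ⟨-M, fun y hy => ?_⟩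
  obtain ⟨x, hx, hyx⟩ := mem_iUnion₂.mp (ht hy)
  have h1 : -M ≤ r x := by
    have := hM (-r x) (Finset.mem_image_of_mem _ hx)
    linarith
  have h2 : ((r x : ℝ) : EReal) < g y := hyx
  exact le_of_lt (lt_of_le_of_lt (by exact_mod_cast h1) h2)

lemma coercive_bdd_below [FiniteDimensional ℝ X] {g : X → EReal}
    (hg : LowerSemicontinuous g) (hbot : ∀ x, g x ≠ ⊥) (hco : OneCoercive g) :
    ∃ c : ℝ, ∀ x : X, (c : EReal) ≤ g x := by
  obtain ⟨R, hR⟩ := hco 0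
  obtain ⟨c, hc⟩ := lsc_bdd_on_compact hg hbot
    (isCompact_closedBall (0 : X) (max R 0))
  refine ⟨min c 0, fun x => ?_⟩
  by_cases hx : ‖x‖ ≤ max R 0
  · refine le_trans ?_ (hc x (by simpa [Metric.mem_closedBall, dist_zero_right] using hx))
    exact_mod_cast min_le_left c 0
  · push_neg at hx
    have h1 := hR x (le_of_lt (lt_of_le_of_lt (le_max_left R 0) hx))
    refine le_trans ?_ h1
    rw [zero_mul]
    exact_mod_cast min_le_right c 0

lemma coercive_cone [FiniteDimensional ℝ X] {g : X → EReal}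
    (hg : LowerSemicontinuous g) (hbot : ∀ x, g x ≠ ⊥) (hco : OneCoercive g)
    {u : X} {α : ℝ} (h : (u, α) ∈ recessionCone (epiSet g)) : u = 0 ∧ 0 ≤ α := by
  obtain ⟨c, hc⟩ := coercive_bdd_below hg hbot hco
  obtain ⟨t, ht, ht0, aseq, ha, hta⟩ := h
  have hfst : Tendsto (fun n => t n • (aseq n).1) atTop (𝓝 u) := by
    have := (continuous_fst.tendsto ((u, α) : X × ℝ)).comp hta
    exact this
  have hsnd : Tendsto (fun n => t n * (aseq n).2) atTop (𝓝 α) := by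
    have := (continuous_snd.tendsto ((u, α) : X × ℝ)).comp hta
    exact this
  have hsnd_lb : ∀ n, c ≤ (aseq n).2 := by
    intro n
    have h1 : (c : EReal) ≤ ((aseq n).2 : EReal) := le_trans (hc _) (ha n)
    exact_mod_cast h1
  have hu : u = 0 := by
    by_contra hu
    have hnu : 0 < ‖u‖ := norm_pos_iff.mpr hu
    have hnorm : Tendsto (fun n => t n * ‖(aseq n).1‖) atTop (𝓝 ‖u‖) := by
      have := hfst.norm
      refine this.congr fun n => ?_
      rw [norm_smul, Real.norm_eq_abs, abs_of_pos (ht n)]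
    have hx_top : Tendsto (fun n => ‖(aseq n).1‖) atTop atTop := by
      have hinv : Tendsto (fun n => (t n)⁻¹) atTop atTop := by
        apply Filter.Tendsto.inv_tendsto_nhdsGT_zero
        rw [tendsto_nhdsWithin_iff]
        exact ⟨ht0, Eventually.of_forall fun n => ht n⟩
      have := Filter.Tendsto.pos_mul_atTop hnu hnorm hinv
      refine this.congr fun n => ?_
      rw [mul_comm (t n) (‖(aseq n).1‖), mul_assoc, mul_inv_cancel₀ (ht n).ne', mul_one]
    have hM : ∀ M : ℝ, M * ‖u‖ ≤ α := by
      intro M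
      obtain ⟨R, hR⟩ := hco M
      have hev : ∀ᶠ n in atTop, M * (t n * ‖(aseq n).1‖) ≤ t n * (aseq n).2 := by
        filter_upwards [hx_top.eventually_ge_atTop R] with n hn
        have h1 : ((M * ‖(aseq n).1‖ : ℝ) : EReal) ≤ ((aseq n).2 : EReal) :=
          le_trans (hR _ hn) (ha n)
        have h2 : M * ‖(aseq n).1‖ ≤ (aseq n).2 := by exact_mod_cast h1
        have := mul_le_mul_of_nonneg_left h2 (ht n).le
        nlinarith [this]
      exact le_of_tendsto_of_tendsto (hnorm.const_mul M) hsnd hev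
    have := hM ((α + 1) / ‖u‖)
    rw [div_mul_cancel₀ _ hnu.ne'] at this
    linarith
  refine ⟨hu, ?_⟩
  have hlb : Tendsto (fun n => t n * c) atTop (𝓝 0) := by
    simpa using ht0.mul_const c
  refine le_of_tendsto_of_tendsto hlb hsnd (Eventually.of_forall fun n => ?_)
  exact mul_le_mul_of_nonneg_left (hsnd_lb n) (ht n).le

lemma epi_nonempty {g : X → EReal} (h : ∃ x, g x ≠ ⊤) (hbot : ∀ x, g x ≠ ⊥) :
    (epiSet g).Nonempty := by
  obtain ⟨x, hx⟩ := h
  exact ⟨(x, (g x).toReal), EReal.le_coe_toReal hx⟩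

lemma epi_closed {g : X → EReal} (hg : LowerSemicontinuous g) : IsClosed (epiSet g) := by
  have h1 : IsClosed {p : X × EReal | g p.1 ≤ p.2} :=
    lowerSemicontinuous_iff_isClosed_epigraph.mp hg
  have h2 : epiSet g = (fun p : X × ℝ => (p.1, (p.2 : EReal))) ⁻¹' {p : X × EReal | g p.1 ≤ p.2} :=
    rfl
  rw [h2]
  exact h1.preimage (continuous_fst.prodMk (continuous_coe_real_ereal.comp continuous_snd))

theorem coercive_closed [FiniteDimensional ℝ X] (g : X → EReal) (htop : ∃ x, g x ≠ ⊤)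
    (hbot : ∀ x, g x ≠ ⊥) (hg : LowerSemicontinuous g) (hco : OneCoercive g) :
    IsClosed (convexHull ℝ (epiSet g)) := by
  have hne : (epiSet g).Nonempty := epi_nonempty htop hbot
  have hzero : recFn g 0 = 0 := by
    refine le_antisymm (recFn_zero_le hne) ?_
    refine le_sInf fun b hb => ?_
    obtain ⟨β, hβ, rfl⟩ := hb
    have h2 := (coercive_cone hg hbot hco hβ).2
    show (0 : EReal) ≤ (β : EReal)
    exact_mod_cast h2
  have htopne : ∀ u : X, u ≠ 0 → recFn g u = ⊤ := by
    intro u hu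
    have hempty : {α : ℝ | (u, α) ∈ recessionCone (epiSet g)} = ∅ := by
      ext α
      simp only [mem_setOf_eq, mem_empty_iff_false, iff_false]
      intro hα
      exact hu (coercive_cone hg hbot hco hα).1
    rw [recFn, hempty]
    simp
  have hrecbot : ∀ u, recFn g u ≠ ⊥ := by
    intro u
    by_cases hu : u = 0
    · rw [hu, hzero]; exact EReal.zero_ne_bot
    · rw [htopne u hu]; exact top_ne_bot
  apply main_closed g hne (epi_closed hg) hrecbot
  · -- convexity of epi recFn
    intro p hp q hq a b ha hb hab
    have hmem : ∀ s : X × ℝ, s ∈ epiSet (recFn g) → s.1 = 0 ∧ 0 ≤ s.2 := by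
      intro s hs
      by_cases h1 : s.1 = 0
      · refine ⟨h1, ?_⟩
        have : recFn g s.1 ≤ (s.2 : EReal) := hs
        rw [h1, hzero] at this
        exact_mod_cast this
      · exfalso
        have : recFn g s.1 ≤ (s.2 : EReal) := hs
        rw [htopne s.1 h1] at this
        exact EReal.coe_ne_top s.2 (top_le_iff.mp this)
    obtain ⟨hp1, hp2⟩ := hmem p hp
    obtain ⟨hq1, hq2⟩ := hmem q hq
    show recFn g (a • p + b • q).1 ≤ (((a • p + b • q).2 : ℝ) : EReal)
    have hfst : (a • p + b • q).1 = 0 := by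
      rw [Prod.fst_add, Prod.smul_fst, Prod.smul_fst, hp1, hq1, smul_zero, smul_zero, add_zero]
    rw [hfst, hzero]
    have : (0:ℝ) ≤ (a • p + b • q).2 := by
      rw [Prod.snd_add, Prod.smul_snd, Prod.smul_snd]
      have := mul_nonneg ha hp2
      have := mul_nonneg hb hq2
      simp only [smul_eq_mul]
      linarith
    exact_mod_cast this
  · -- hpos
    intro u hu
    rw [htopne u hu, htopne (-u) (neg_ne_zero.mpr hu), EReal.top_add_top]
    exact EReal.zero_lt_top
  · -- hsub
    intro x u
    by_cases hu : u = 0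
    · rw [hu, add_zero, hzero, add_zero]
    · rw [htopne u hu, EReal.add_top_of_ne_bot (hbot x)]
      exact le_top


end helpers

/-- Let `f` be a proper lsc function on a nontrivial finite-dimensional
real normed space. If the recession function `f_∞` is proper and convex, satisfies
`f_∞(u) + f_∞(-u) > 0` for all `u ≠ 0`, and `f(x+u) ≤ f(x) + f_∞(u)` for all `x, u`,
then `conv (epi f)` is closed. In particular, `conv (epi g)` is closed for every proper
lsc 1-coercive function `g`. (Convexity of `f_∞` is expressed via its epigraph.) -/
theorem stmt8 [FiniteDimensional ℝ X] [Nontrivial X]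
    (f : X → EReal) (hproper : (∃ x, f x ≠ ⊤) ∧ ∀ x, f x ≠ ⊥)
    (hlsc : LowerSemicontinuous f)
    (hrecProper : (∃ u, recFn f u ≠ ⊤) ∧ ∀ u, recFn f u ≠ ⊥)
    (hrecConvex : Convex ℝ (epiSet (recFn f)))
    (hpos : ∀ u : X, u ≠ 0 → 0 < recFn f u + recFn f (-u))
    (hsub : ∀ x u : X, f (x + u) ≤ f x + recFn f u) :
    IsClosed (convexHull ℝ (epiSet f)) ∧
    ∀ g : X → EReal, (∃ x, g x ≠ ⊤) → (∀ x, g x ≠ ⊥) → LowerSemicontinuous g →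
      OneCoercive g → IsClosed (convexHull ℝ (epiSet g)) := by
  constructor
  · exact main_closed f (epi_nonempty hproper.1 hproper.2) (epi_closed hlsc)
      hrecProper.2 hrecConvex hpos hsub
  · intro g htop hbot hg hco
    exact coercive_closed g htop hbot hg hco
end
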